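/- For every γ ∈ (0,1) and every λ > 0 there exists a function G : [0,1] → ℝ which is continuous, monotone increasing and concave on [0,1], with G(0) = 0 and G(x) > 0 for x ∈ (0,1], together with a strictly decreasing sequence (x_n) in (0,1) converging to 0 such that λ·x_n·G(x_n)·(−log x_n) ∈ (0,1] for every n and G(λ·x_n·G(x_n)·(−log x_n)) / G(x_n) ≥ (1/2)·log(−log x_n) for every n. In particular, limsup_{x→0⁺} G(λ·x·G(x)·(−log x)) / G(x) = ∞. -/

import Mathlib

open Real Filter Set

set_option linter.unusedSectionVars false
set_option linter.unusedVariables false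
set_option linter.unusedTactic false

namespace LossCons

noncomputable def Lam (n : ℕ) : ℝ := 16 * 2 ^ n
noncomputable def LL (n : ℕ) : ℝ := Real.exp (Lam n)
noncomputable def X (n : ℕ) : ℝ := Real.exp (-(LL n))
noncomputable def Y (lam : ℝ) (n : ℕ) : ℝ := Lam n / (lam * LL n)
noncomputable def A (n : ℕ) : ℝ := Lam n * X n
noncomputable def Z (lam : ℝ) (n : ℕ) : ℝ := (Lam n / 2) * Y lam n

noncomputable def P (k : ℕ) : ℝ := if Even k then A (k / 2) else X (k / 2)
noncomputable def Q (lam : ℝ) (k : ℕ) : ℝ := if Even k then Z lam (k / 2) else Y lam (k / 2)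

noncomputable def S (lam : ℝ) : ℕ → ℝ
  | 0 => 0
  | (k+1) => (Q lam k - Q lam (k+1)) / (P k - P (k+1))

noncomputable def line (lam : ℝ) (k : ℕ) (t : ℝ) : ℝ := Q lam k + S lam k * (t - P k)

noncomputable def G (lam : ℝ) (t : ℝ) : ℝ := ⨅ k, line lam k t

lemma Lam_ge (n : ℕ) : 16 ≤ Lam n := by
  have h : (1:ℝ) ≤ 2 ^ n := one_le_pow₀ (by norm_num)
  unfold Lam; nlinarith

lemma Lam_pos (n : ℕ) : 0 < Lam n := lt_of_lt_of_le (by norm_num) (Lam_ge n)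

lemma Lam_succ (n : ℕ) : Lam (n+1) = 2 * Lam n := by unfold Lam; ring

lemma nat_le_Lam (n : ℕ) : (n:ℝ) + 1 ≤ Lam n / 2 := by
  have h : (n:ℝ) + 1 ≤ 2 ^ n := by
    exact_mod_cast Nat.succ_le_of_lt (Nat.lt_two_pow_self (n := n))
  unfold Lam; nlinarith

lemma LL_pos (n : ℕ) : 0 < LL n := Real.exp_pos _

lemma two_mul_le_exp {t : ℝ} (ht : 0 ≤ t) : 2 * t ≤ Real.exp t := by
  have h := Real.add_one_le_exp (t/2)
  have h2 : Real.exp t = Real.exp (t/2) * Real.exp (t/2) := by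
    rw [← Real.exp_add]; ring_nf
  nlinarith [Real.exp_pos (t/2), sq_nonneg (t/2 - 1)]

lemma exp_quad {t : ℝ} (ht : 16 ≤ t) : 4 * t ≤ Real.exp t := by
  have h := Real.add_one_le_exp (t/2)
  have h2 : Real.exp t = Real.exp (t/2) * Real.exp (t/2) := by
    rw [← Real.exp_add]; ring_nf
  nlinarith [Real.exp_pos (t/2)]

lemma LL_ge (n : ℕ) : 4 * Lam n ≤ LL n := exp_quad (Lam_ge n)

lemma Lam_le_LL (n : ℕ) : Lam n ≤ LL n := by nlinarith [LL_ge n, Lam_pos n]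

lemma LL_ge64 (n : ℕ) : 64 ≤ LL n := by nlinarith [LL_ge n, Lam_ge n]

lemma LL_succ (n : ℕ) : LL (n+1) = LL n * LL n := by
  unfold LL; rw [← Real.exp_add]; congr 1; rw [Lam_succ]; ring

lemma X_pos (n : ℕ) : 0 < X n := Real.exp_pos _

lemma X_lt_one (n : ℕ) : X n < 1 := by
  unfold X; apply Real.exp_lt_one_iff.mpr; nlinarith [LL_pos n]

lemma X_succ (n : ℕ) : X (n+1) = X n * Real.exp (-(LL n * (LL n - 1))) := by
  unfold X; rw [← Real.exp_add]; congr 1; rw [LL_succ]; ring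

lemma K0 (n : ℕ) : 4 * LL n * X (n+1) ≤ X n := by
  set B := LL n * (LL n - 1) with hB
  have hA : LL n ≤ B := by rw [hB]; nlinarith [LL_ge64 n]
  have h1 : 4 * LL n ≤ Real.exp B :=
    (exp_quad (by nlinarith [LL_ge64 n])).trans (Real.exp_le_exp.2 hA)
  have h2 : Real.exp B * Real.exp (-B) = 1 := by rw [← Real.exp_add]; simp
  rw [X_succ]
  have h3 : 4 * LL n * Real.exp (-B) ≤ 1 := by
    nlinarith [Real.exp_pos (-B), mul_le_mul_of_nonneg_right h1 (Real.exp_pos (-B)).le]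
  nlinarith [X_pos n, mul_le_mul_of_nonneg_right h3 (X_pos n).le, Real.exp_pos (-B)]

lemma K1 (n : ℕ) : A (n+1) ≤ X n / 2 := by
  unfold A
  rw [Lam_succ]
  nlinarith [K0 n, LL_ge n, X_pos (n+1), Lam_pos n]

lemma X_lt_A (n : ℕ) : X n < A n := by
  unfold A; nlinarith [Lam_ge n, X_pos n]

lemma A_pos (n : ℕ) : 0 < A n := (X_pos n).trans (X_lt_A n)

lemma A_le_one (n : ℕ) : A n ≤ 1 := by
  have h1 : Lam n ≤ Real.exp (LL n) := by
    nlinarith [Lam_le_LL n, Real.add_one_le_exp (LL n)]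
  have h2 : Real.exp (LL n) * Real.exp (-(LL n)) = 1 := by rw [← Real.exp_add]; simp
  unfold A X
  nlinarith [Real.exp_pos (-(LL n)), mul_le_mul_of_nonneg_right h1 (Real.exp_pos (-(LL n))).le]


section Bpart

variable {lam : ℝ} (hlam : 0 < lam)

include hlam

lemma Y_pos (n : ℕ) : 0 < Y lam n :=
  div_pos (Lam_pos n) (mul_pos hlam (LL_pos n))

lemma Z_pos (n : ℕ) : 0 < Z lam n :=
  mul_pos (by nlinarith [Lam_pos n]) (Y_pos hlam n)

lemma Y_lt_Z (n : ℕ) : Y lam n < Z lam n := by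
  unfold Z; nlinarith [Y_pos hlam n, Lam_ge n]

lemma Zsucc_eq (n : ℕ) : Z lam (n+1) = 2 * Lam n^2 / (lam * (LL n * LL n)) := by
  unfold Z Y
  rw [Lam_succ, LL_succ]
  field_simp

lemma K4 (n : ℕ) : Z lam (n+1) ≤ Y lam n / 2 := by
  have hy : Y lam n / 2 = Lam n / (lam * LL n * 2) := by unfold Y; rw [div_div]
  have hp1 : (0:ℝ) < lam * (LL n * LL n) := mul_pos hlam (mul_pos (LL_pos n) (LL_pos n))
  have hp2 : (0:ℝ) < lam * LL n * 2 := by nlinarith [mul_pos hlam (LL_pos n)]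
  rw [Zsucc_eq hlam, hy, div_le_div_iff₀ hp1 hp2]
  nlinarith [LL_ge n, Lam_pos n, LL_pos n, hlam,
    mul_le_mul_of_nonneg_left (LL_ge n) (le_of_lt (mul_pos (mul_pos (Lam_pos n) hlam) (LL_pos n)))]

lemma K8 (n : ℕ) : Y lam n * A (n+1) ≤ Z lam (n+1) * X n := by
  have hK : LL n * X (n+1) ≤ X n := by nlinarith [K0 n, LL_pos n, X_pos (n+1)]
  have h2 : Y lam n * A (n+1) = Lam n * A (n+1) / (lam * LL n) := by
    unfold Y; rw [div_mul_eq_mul_div]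
  have h3 : Z lam (n+1) * X n = 2 * Lam n^2 * X n / (lam * (LL n * LL n)) := by
    rw [Zsucc_eq hlam, div_mul_eq_mul_div]
  have hp1 : (0:ℝ) < lam * LL n := mul_pos hlam (LL_pos n)
  have hp2 : (0:ℝ) < lam * (LL n * LL n) := mul_pos hlam (mul_pos (LL_pos n) (LL_pos n))
  rw [h2, h3, div_le_div_iff₀ hp1 hp2]
  have hA : A (n+1) = 2 * Lam n * X (n+1) := by unfold A; rw [Lam_succ]
  rw [hA]
  have hq : (0:ℝ) ≤ 2 * Lam n ^ 2 * lam * LL n := by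
    nlinarith [mul_pos (mul_pos (mul_pos (by norm_num : (0:ℝ) < 2) (pow_pos (Lam_pos n) 2)) hlam) (LL_pos n)]
  nlinarith [Lam_pos n, LL_pos n, X_pos (n+1), X_pos n, hlam,
    mul_le_mul_of_nonneg_left hK hq]

lemma Ysucc_eq (n : ℕ) : Y lam (n+1) = 2 * Lam n / (lam * (LL n * LL n)) := by
  unfold Y; rw [Lam_succ, LL_succ]

lemma crossM (n : ℕ) : 4 * Y lam n * X (n+1) ≤ Y lam (n+1) * X n := by
  have hK : 2 * (LL n * X (n+1)) ≤ X n := by nlinarith [K0 n, LL_pos n, X_pos (n+1)]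
  have h2 : 4 * Y lam n * X (n+1) = 4 * Lam n * X (n+1) / (lam * LL n) := by
    unfold Y; field_simp
  have h3 : Y lam (n+1) * X n = 2 * Lam n * X n / (lam * (LL n * LL n)) := by
    rw [Ysucc_eq hlam, div_mul_eq_mul_div]
  have hp1 : (0:ℝ) < lam * LL n := mul_pos hlam (LL_pos n)
  have hp2 : (0:ℝ) < lam * (LL n * LL n) := mul_pos hlam (mul_pos (LL_pos n) (LL_pos n))
  rw [h2, h3, div_le_div_iff₀ hp1 hp2]
  have hq : (0:ℝ) ≤ 2 * Lam n * lam * LL n := by nlinarith [Lam_pos n, LL_pos n, hlam, mul_pos (mul_pos (Lam_pos n) hlam) (LL_pos n)]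
  nlinarith [Lam_pos n, LL_pos n, X_pos (n+1), X_pos n, hlam,
    mul_le_mul_of_nonneg_left hK hq]


end Bpart

lemma P_even (n : ℕ) : P (2*n) = A n := by
  unfold P
  rw [if_pos ⟨n, (two_mul n)⟩]
  congr 1
  omega

lemma P_odd (n : ℕ) : P (2*n+1) = X n := by
  unfold P
  rw [if_neg (by rw [Nat.even_iff]; omega)]
  congr 1
  omega

lemma P_even' (n : ℕ) : P (2*n+2) = A (n+1) := by
  have h : 2*n+2 = 2*(n+1) := by ring
  rw [h, P_even]

lemma Q_even {lam : ℝ} (n : ℕ) : Q lam (2*n) = Z lam n := by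
  unfold Q
  rw [if_pos ⟨n, (two_mul n)⟩]
  congr 1
  omega

lemma Q_odd {lam : ℝ} (n : ℕ) : Q lam (2*n+1) = Y lam n := by
  unfold Q
  rw [if_neg (by rw [Nat.even_iff]; omega)]
  congr 1
  omega

lemma Q_even' {lam : ℝ} (n : ℕ) : Q lam (2*n+2) = Z lam (n+1) := by
  have h : 2*n+2 = 2*(n+1) := by ring
  rw [h, Q_even]

lemma trich (k : ℕ) : k = 0 ∨ (∃ n, k = 2*n+1) ∨ (∃ n, k = 2*n+2) := by
  rcases Nat.even_or_odd k with ⟨m, hm⟩ | ⟨m, hm⟩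
  · rcases Nat.eq_zero_or_pos m with h0 | h0
    · left; omega
    · right; right; exact ⟨m - 1, by omega⟩
  · right; left; exact ⟨m, by omega⟩

lemma P_pos (k : ℕ) : 0 < P k := by
  rcases trich k with h | ⟨n, h⟩ | ⟨n, h⟩ <;> subst h
  · rw [show (0:ℕ) = 2*0 from rfl, P_even]; exact A_pos 0
  · rw [P_odd]; exact X_pos n
  · rw [P_even']; exact A_pos (n+1)

lemma P_anti (k : ℕ) : P (k+1) < P k := by
  rcases trich k with h | ⟨n, h⟩ | ⟨n, h⟩ <;> subst h
  · rw [show (0:ℕ)+1 = 2*0+1 from rfl, show (0:ℕ) = 2*0 from rfl, P_odd, P_even]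
    exact X_lt_A 0
  · rw [P_even', P_odd]
    calc A (n+1) ≤ X n / 2 := K1 n
    _ < X n := by nlinarith [X_pos n]
  · rw [show 2*n+2+1 = 2*(n+1)+1 from by ring, P_odd, P_even']
    exact X_lt_A (n+1)

lemma P_strictAnti : StrictAnti P := strictAnti_nat_of_succ_lt P_anti

lemma Q_pos {lam : ℝ} (hlam : 0 < lam) (k : ℕ) : 0 < Q lam k := by
  rcases trich k with h | ⟨n, h⟩ | ⟨n, h⟩ <;> subst h
  · rw [show (0:ℕ) = 2*0 from rfl, Q_even]; exact Z_pos hlam 0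
  · rw [Q_odd]; exact Y_pos hlam n
  · rw [Q_even']; exact Z_pos hlam (n+1)

lemma Q_anti {lam : ℝ} (hlam : 0 < lam) (k : ℕ) : Q lam (k+1) < Q lam k := by
  rcases trich k with h | ⟨n, h⟩ | ⟨n, h⟩ <;> subst h
  · rw [show (0:ℕ)+1 = 2*0+1 from rfl, show (0:ℕ) = 2*0 from rfl, Q_odd, Q_even]
    exact Y_lt_Z hlam 0
  · rw [Q_even', Q_odd]
    calc Z lam (n+1) ≤ Y lam n / 2 := K4 hlam n
    _ < Y lam n := by nlinarith [Y_pos hlam n]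
  · rw [show 2*n+2+1 = 2*(n+1)+1 from by ring, Q_odd, Q_even']
    exact Y_lt_Z hlam (n+1)

lemma S_odd (lam : ℝ) (n : ℕ) :
    S lam (2*n+1) = (Z lam n - Y lam n) / (A n - X n) := by
  show (Q lam (2*n) - Q lam (2*n+1)) / (P (2*n) - P (2*n+1)) = _
  rw [Q_even, Q_odd, P_even, P_odd]

lemma S_even (lam : ℝ) (n : ℕ) :
    S lam (2*n+2) = (Y lam n - Z lam (n+1)) / (X n - A (n+1)) := by
  show (Q lam (2*n+1) - Q lam (2*n+2)) / (P (2*n+1) - P (2*n+2)) = _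
  rw [Q_odd, Q_even', P_odd, P_even']

lemma dA_pos (n : ℕ) : 0 < A n - X n := sub_pos.2 (X_lt_A n)
lemma dX_pos (n : ℕ) : 0 < X n - A (n+1) := by nlinarith [K1 n, X_pos n]

lemma sb2' {lam : ℝ} (hlam : 0 < lam) (n : ℕ) :
    S lam (2*n+1) * (2 * X n) ≤ Y lam n := by
  rw [S_odd, div_mul_eq_mul_div, div_le_iff₀ (dA_pos n)]
  have hz : Z lam n = (Lam n / 2) * Y lam n := rfl
  have ha : A n = Lam n * X n := rfl
  rw [hz, ha]
  nlinarith [mul_pos (X_pos n) (Y_pos hlam n)]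

lemma sb1' {lam : ℝ} (hlam : 0 < lam) (n : ℕ) :
    Y lam n ≤ S lam (2*n+1) * (4 * X n) := by
  rw [S_odd, div_mul_eq_mul_div, le_div_iff₀ (dA_pos n)]
  have hz : Z lam n = (Lam n / 2) * Y lam n := rfl
  have ha : A n = Lam n * X n := rfl
  rw [hz, ha]
  nlinarith [mul_pos (X_pos n) (Y_pos hlam n), Lam_ge n]

lemma sb3' {lam : ℝ} (hlam : 0 < lam) (n : ℕ) :
    Y lam n ≤ S lam (2*n+2) * (2 * X n) := by
  rw [S_even, div_mul_eq_mul_div, le_div_iff₀ (dX_pos n)]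
  nlinarith [K4 hlam n, X_pos n, mul_pos (Y_pos hlam n) (A_pos (n+1)), A_pos (n+1)]

lemma sb5' {lam : ℝ} (hlam : 0 < lam) (n : ℕ) :
    S lam (2*n+2) * X n ≤ Y lam n := by
  rw [S_even, div_mul_eq_mul_div, div_le_iff₀ (dX_pos n)]
  nlinarith [K8 hlam n]

lemma S_nonneg {lam : ℝ} (hlam : 0 < lam) (k : ℕ) : 0 ≤ S lam k := by
  cases k with
  | zero => exact le_refl 0
  | succ k =>
    show 0 ≤ (Q lam k - Q lam (k+1)) / (P k - P (k+1))
    exact div_nonneg (by nlinarith [Q_anti hlam k]) (by nlinarith [P_anti k])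

lemma S_mono {lam : ℝ} (hlam : 0 < lam) (k : ℕ) : S lam k ≤ S lam (k+1) := by
  rcases trich k with h | ⟨n, h⟩ | ⟨n, h⟩ <;> subst h
  · show S lam 0 ≤ S lam 1
    show (0:ℝ) ≤ S lam 1
    exact S_nonneg hlam 1
  · -- S (2n+1) ≤ S (2n+2)
    have h1 := sb2' hlam n
    have h2 := sb3' hlam n
    have hx : (0:ℝ) < 2 * X n := by nlinarith [X_pos n]
    exact le_of_mul_le_mul_right (h1.trans h2) hx
  · -- S (2n+2) ≤ S (2n+3)
    have h1 := sb5' hlam n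
    have h2 := sb1' hlam (n+1)
    have h3 := crossM hlam n
    have hx : (0:ℝ) < X n * (4 * X (n+1)) := by nlinarith [X_pos n, X_pos (n+1)]
    have key : S lam (2*n+2) * (X n * (4 * X (n+1))) ≤ S lam (2*(n+1)+1) * (X n * (4 * X (n+1))) := by
      calc S lam (2*n+2) * (X n * (4 * X (n+1)))
          = (S lam (2*n+2) * X n) * (4 * X (n+1)) := by ring
        _ ≤ Y lam n * (4 * X (n+1)) := by
            apply mul_le_mul_of_nonneg_right h1
            nlinarith [X_pos (n+1)]
        _ = 4 * Y lam n * X (n+1) := by ring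
        _ ≤ Y lam (n+1) * X n := h3
        _ ≤ (S lam (2*(n+1)+1) * (4 * X (n+1))) * X n := by
            apply mul_le_mul_of_nonneg_right h2
            exact (X_pos n).le
        _ = S lam (2*(n+1)+1) * (X n * (4 * X (n+1))) := by ring
    have := le_of_mul_le_mul_right key hx
    calc S lam (2*n+2) ≤ S lam (2*(n+1)+1) := this
      _ = S lam (2*n+2+1) := by norm_num; ring_nf

lemma S_mono_le {lam : ℝ} (hlam : 0 < lam) {j k : ℕ} (h : j ≤ k) : S lam j ≤ S lam k := by
  induction k with
  | zero => simp_all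
  | succ k ih =>
    rcases Nat.eq_or_lt_of_le h with h' | h'
    · exact le_of_eq (by rw [h'])
    · exact (ih (Nat.lt_succ_iff.mp h')).trans (S_mono hlam k)

lemma intercept_shift {lam : ℝ} (k : ℕ) :
    Q lam k - S lam (k+1) * P k = Q lam (k+1) - S lam (k+1) * P (k+1) := by
  have hp : P k - P (k+1) ≠ 0 := ne_of_gt (by nlinarith [P_anti k])
  have h : S lam (k+1) * (P k - P (k+1)) = Q lam k - Q lam (k+1) := by
    show (Q lam k - Q lam (k+1)) / (P k - P (k+1)) * (P k - P (k+1)) = _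
    exact div_mul_cancel₀ _ hp
  nlinarith [h]

lemma intercept {lam : ℝ} (hlam : 0 < lam) (k : ℕ) : 0 ≤ Q lam k - S lam k * P k := by
  rcases trich k with h | ⟨n, h⟩ | ⟨n, h⟩ <;> subst h
  · show 0 ≤ Q lam 0 - S lam 0 * P 0
    show 0 ≤ Q lam 0 - 0 * P 0
    nlinarith [Q_pos hlam 0]
  · rw [Q_odd, P_odd]
    have h1 := sb2' hlam n
    have h2 := mul_nonneg (S_nonneg hlam (2*n+1)) (X_pos n).le
    nlinarith
  · rw [← intercept_shift, Q_odd, P_odd]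
    have h1 := sb5' hlam n
    nlinarith


variable {lam : ℝ}

lemma line_vertex (k : ℕ) : line lam k (P k) = Q lam k := by unfold line; ring

lemma line_diff (k : ℕ) (t : ℝ) :
    line lam (k+1) t - line lam k t = (S lam (k+1) - S lam k) * (t - P k) := by
  have h := intercept_shift (lam := lam) k
  unfold line
  linear_combination -h

lemma line_nonneg (hlam : 0 < lam) (k : ℕ) {t : ℝ} (ht : 0 ≤ t) : 0 ≤ line lam k t := by
  have h1 := intercept hlam k
  have h2 := mul_nonneg (S_nonneg hlam k) ht
  unfold line
  nlinarith

lemma line_mono (hlam : 0 < lam) (k : ℕ) {t u : ℝ} (htu : t ≤ u) :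
    line lam k t ≤ line lam k u := by
  unfold line
  nlinarith [mul_le_mul_of_nonneg_left htu (S_nonneg hlam k)]

lemma chainA (hlam : 0 < lam) {k j : ℕ} (hkj : k ≤ j) {t : ℝ} (ht : P k ≤ t) :
    line lam k t ≤ line lam j t := by
  induction j with
  | zero => interval_cases k; exact le_refl _
  | succ j ih =>
    rcases Nat.eq_or_lt_of_le hkj with h' | h'
    · exact le_of_eq (by rw [h'])
    · have hkj' : k ≤ j := Nat.lt_succ_iff.mp h'
      have h1 : line lam k t ≤ line lam j t := ih hkj'
      have h2 : 0 ≤ line lam (j+1) t - line lam j t := by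
        rw [line_diff]
        have hs : S lam j ≤ S lam (j+1) := S_mono_le hlam (Nat.le_succ j)
        have hp : P j ≤ P k := P_strictAnti.antitone hkj'
        nlinarith
      linarith

lemma chainB (hlam : 0 < lam) {k j : ℕ} (hkj : j ≤ k + 1) {t : ℝ} (ht : t ≤ P k) :
    line lam (k+1) t ≤ line lam j t := by
  induction k with
  | zero =>
    interval_cases j
    · have h2 : line lam 1 t - line lam 0 t ≤ 0 := by
        rw [line_diff]
        have hs : S lam 0 ≤ S lam 1 := S_mono_le hlam (Nat.le_succ 0)
        nlinarith
      linarith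
    · exact le_refl _
  | succ k ih =>
    rcases Nat.eq_or_lt_of_le hkj with h' | h'
    · exact le_of_eq (by rw [h'])
    · have hkj' : j ≤ k + 1 := Nat.lt_succ_iff.mp h'
      have hle : t ≤ P k := ht.trans (P_anti k).le
      have h1 : line lam (k+1) t ≤ line lam j t := ih hkj' hle
      have h2 : line lam (k+2) t - line lam (k+1) t ≤ 0 := by
        rw [line_diff]
        have hs : S lam (k+1) ≤ S lam (k+2) := S_mono_le hlam (Nat.le_succ (k+1))
        nlinarith
      linarith

lemma bdd (hlam : 0 < lam) {t : ℝ} (ht : 0 ≤ t) :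
    BddBelow (Set.range fun k => line lam k t) := by
  refine ⟨0, ?_⟩
  rintro v ⟨k, rfl⟩
  exact line_nonneg hlam k ht

lemma G_le (hlam : 0 < lam) {t : ℝ} (ht : 0 ≤ t) (k : ℕ) : G lam t ≤ line lam k t :=
  ciInf_le (bdd hlam ht) k

lemma G_nonneg (hlam : 0 < lam) {t : ℝ} (ht : 0 ≤ t) : 0 ≤ G lam t :=
  le_ciInf fun k => line_nonneg hlam k ht

lemma G_seg (hlam : 0 < lam) {k : ℕ} {t : ℝ} (h1 : P (k+1) ≤ t) (h2 : t ≤ P k) :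
    G lam t = line lam (k+1) t := by
  have ht : 0 ≤ t := ((P_pos (k+1)).le).trans h1
  refine le_antisymm (G_le hlam ht (k+1)) (le_ciInf fun j => ?_)
  rcases le_or_gt j (k+1) with h | h
  · exact chainB hlam h h2
  · exact chainA hlam h.le h1

lemma G_top (hlam : 0 < lam) {t : ℝ} (ht : P 0 ≤ t) : G lam t = Q lam 0 := by
  have h0 : line lam 0 t = Q lam 0 := by
    show Q lam 0 + S lam 0 * (t - P 0) = Q lam 0
    show Q lam 0 + 0 * (t - P 0) = Q lam 0
    ring
  have ht' : 0 ≤ t := (P_pos 0).le.trans ht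
  refine le_antisymm (h0 ▸ G_le hlam ht' 0) (le_ciInf fun j => ?_)
  rw [← h0]
  exact chainA hlam (Nat.zero_le j) ht

lemma G_vertex (hlam : 0 < lam) (k : ℕ) : G lam (P k) = Q lam k := by
  cases k with
  | zero => rw [G_top hlam (le_refl _)]
  | succ k => rw [G_seg hlam (le_refl _) (P_anti k).le, line_vertex]

lemma G_mono (hlam : 0 < lam) {t u : ℝ} (ht : 0 ≤ t) (htu : t ≤ u) :
    G lam t ≤ G lam u := by
  refine le_ciInf fun k => ?_
  exact (G_le hlam ht k).trans (line_mono hlam k htu)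

lemma G_concave (hlam : 0 < lam) : ConcaveOn ℝ (Set.Icc (0:ℝ) 1) (G lam) := by
  refine ⟨convex_Icc _ _, fun u hu v hv a b ha hb hab => ?_⟩
  simp only [smul_eq_mul]
  refine le_ciInf fun k => ?_
  have hline : line lam k (a * u + b * v) = a * line lam k u + b * line lam k v := by
    unfold line
    linear_combination (S lam k * P k - Q lam k) * hab
  rw [hline]
  have h1 : a * G lam u ≤ a * line lam k u :=
    mul_le_mul_of_nonneg_left (G_le hlam hu.1 k) ha
  have h2 : b * G lam v ≤ b * line lam k v :=
    mul_le_mul_of_nonneg_left (G_le hlam hv.1 k) hb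
  linarith

-- X tends to zero
lemma X_le (n : ℕ) : X n ≤ Real.exp (-((n:ℝ)+1)) := by
  unfold X
  apply Real.exp_le_exp.2
  have h1 := nat_le_Lam n
  have h2 := Lam_le_LL n
  nlinarith

lemma X_tendsto : Tendsto X atTop (nhds 0) := by
  have hA : Tendsto (fun n : ℕ => (n:ℝ) + 1) atTop atTop :=
    tendsto_atTop_add_const_right _ 1 tendsto_natCast_atTop_atTop
  have hb : Tendsto (fun n : ℕ => -((n:ℝ)+1)) atTop atBot := by
    exact tendsto_neg_atBot_iff.mpr hA
  have h1 : Tendsto (fun n : ℕ => -(LL n)) atTop atBot := by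
    apply tendsto_atBot_mono (fun n => ?_) hb
    have h1 := nat_le_Lam n
    have h2 := Lam_le_LL n
    nlinarith
  exact Real.tendsto_exp_atBot.comp h1

lemma Y_le (hlam : 0 < lam) (n : ℕ) : Y lam n ≤ Real.exp (-((n:ℝ)+1)) / lam := by
  unfold Y
  rw [div_le_div_iff₀ (mul_pos hlam (LL_pos n)) hlam]
  have h1 : Lam n ≤ Real.exp (Lam n / 2) := by
    have := two_mul_le_exp (t := Lam n / 2) (by nlinarith [Lam_pos n])
    nlinarith
  have h2 : Real.exp (Lam n / 2) ≤ Real.exp (Lam n - ((n:ℝ)+1)) := by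
    apply Real.exp_le_exp.2
    have := nat_le_Lam n
    linarith
  have h3 : Real.exp (Lam n - ((n:ℝ)+1)) = Real.exp (-((n:ℝ)+1)) * LL n := by
    unfold LL
    rw [← Real.exp_add]
    ring_nf
  have h4 : Lam n ≤ Real.exp (-((n:ℝ)+1)) * LL n := by
    rw [← h3]; exact h1.trans h2
  nlinarith [hlam]

lemma Y_small (hlam : 0 < lam) {ε : ℝ} (hε : 0 < ε) : ∃ n, Y lam n < ε := by
  obtain ⟨n, hn⟩ := exists_nat_gt (-Real.log (lam * ε))
  refine ⟨n, lt_of_le_of_lt (Y_le hlam n) ?_⟩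
  rw [div_lt_iff₀ hlam]
  have h1 : Real.exp (-((n:ℝ)+1)) < Real.exp (Real.log (lam * ε)) := by
    apply Real.exp_lt_exp.2
    linarith
  rw [Real.exp_log (mul_pos hlam hε)] at h1
  nlinarith

lemma G_zero (hlam : 0 < lam) : G lam 0 = 0 := by
  refine le_antisymm ?_ (G_nonneg hlam (le_refl 0))
  by_contra h
  push_neg at h
  obtain ⟨n, hn⟩ := Y_small hlam h
  have h1 : G lam 0 ≤ line lam (2*n+1) 0 := G_le hlam (le_refl 0) _
  have h2 : line lam (2*n+1) 0 ≤ Q lam (2*n+1) := by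
    unfold line
    nlinarith [mul_nonneg (S_nonneg hlam (2*n+1)) (P_pos (2*n+1)).le]
  rw [Q_odd] at h2
  linarith

lemma exists_P_lt (hlam : 0 < lam) {t : ℝ} (ht : 0 < t) : ∃ j, P j < t := by
  obtain ⟨n, hn⟩ := (X_tendsto.eventually (gt_mem_nhds ht)).exists
  exact ⟨2*n+1, by rwa [P_odd]⟩

lemma G_pos (hlam : 0 < lam) {t : ℝ} (ht : 0 < t) : 0 < G lam t := by
  rcases le_or_gt (P 0) t with h | h
  · rw [G_top hlam h]; exact Q_pos hlam 0
  · have hex := exists_P_lt hlam ht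
    obtain ⟨j, hjlt, hjmin⟩ : ∃ j, P j < t ∧ ∀ i < j, ¬ P i < t :=
      ⟨Nat.find hex, Nat.find_spec hex, fun i hi => Nat.find_min hex hi⟩
    have hj0 : j ≠ 0 := by
      intro h0
      rw [h0] at hjlt
      linarith
    obtain ⟨j', rfl⟩ : ∃ j', j = j' + 1 := ⟨j - 1, by omega⟩
    have hj' : ¬ P j' < t := hjmin j' (by omega)
    push_neg at hj'
    rw [G_seg hlam hjlt.le hj']
    calc (0:ℝ) < Q lam (j'+1) := Q_pos hlam _
      _ = line lam (j'+1) (P (j'+1)) := (line_vertex _).symm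
      _ ≤ line lam (j'+1) t := line_mono hlam _ hjlt.le

-- min formulas
lemma G_min_top (hlam : 0 < lam) {u : ℝ} (hu : P 1 ≤ u) :
    G lam u = min (line lam 0 u) (line lam 1 u) := by
  rcases le_or_gt (P 0) u with h | h
  · rw [G_top hlam h]
    have h1 : line lam 0 u ≤ line lam 1 u := chainA hlam (Nat.zero_le 1) h
    rw [min_eq_left h1]
    show _ = Q lam 0 + S lam 0 * (u - P 0)
    show _ = Q lam 0 + 0 * (u - P 0)
    ring
  · rw [G_seg hlam hu h.le]
    have h1 : line lam 1 u ≤ line lam 0 u := chainB hlam (Nat.zero_le 1) h.le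
    rw [min_eq_right h1]

lemma G_min_seg (hlam : 0 < lam) {k : ℕ} {u : ℝ} (h1 : P (k+2) ≤ u) (h2 : u ≤ P k) :
    G lam u = min (line lam (k+1) u) (line lam (k+2) u) := by
  rcases le_or_gt (P (k+1)) u with h | h
  · rw [G_seg hlam h h2]
    have hle : line lam (k+1) u ≤ line lam (k+2) u := chainA hlam (Nat.le_succ _) h
    rw [min_eq_left hle]
  · rw [G_seg hlam h1 h.le]
    have hle : line lam (k+2) u ≤ line lam (k+1) u := chainB hlam (Nat.le_succ _) h.le
    rw [min_eq_right hle]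

lemma line_continuous (k : ℕ) : Continuous (line lam k) := by
  unfold line
  fun_prop

lemma G_contAt (hlam : 0 < lam) {t : ℝ} (ht : 0 < t) : ContinuousAt (G lam) t := by
  rcases lt_or_ge (P 1) t with h | h
  · apply ContinuousAt.congr (f := fun u => min (line lam 0 u) (line lam 1 u))
    · exact ((line_continuous 0).min (line_continuous 1)).continuousAt
    · filter_upwards [Ioi_mem_nhds h] with u hu
      exact (G_min_top hlam (le_of_lt hu)).symm
  · have hex := exists_P_lt hlam ht
    obtain ⟨j, hjlt, hjmin⟩ : ∃ j, P j < t ∧ ∀ i < j, ¬ P i < t :=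
      ⟨Nat.find hex, Nat.find_spec hex, fun i hi => Nat.find_min hex hi⟩
    have hj2 : 2 ≤ j := by
      by_contra hc
      push_neg at hc
      interval_cases j
      · have := P_anti 0; linarith
      · linarith
    obtain ⟨k, rfl⟩ : ∃ k, j = k + 2 := ⟨j - 2, by omega⟩
    have hk1 : ¬ P (k+1) < t := hjmin (k+1) (by omega)
    push_neg at hk1
    have hk : t < P k := lt_of_le_of_lt hk1 (P_anti k)
    apply ContinuousAt.congr (f := fun u => min (line lam (k+1) u) (line lam (k+2) u))
    · exact ((line_continuous (k+1)).min (line_continuous (k+2))).continuousAt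
    · filter_upwards [Ioo_mem_nhds hjlt hk] with u hu
      exact (G_min_seg hlam hu.1.le hu.2.le).symm

lemma G_contWithin_zero (hlam : 0 < lam) :
    ContinuousWithinAt (G lam) (Set.Icc 0 1) 0 := by
  rw [Metric.continuousWithinAt_iff]
  intro ε hε
  obtain ⟨n, hn⟩ := Y_small hlam (half_pos hε)
  set k := 2*n+1 with hk
  have hS : 0 ≤ S lam k := S_nonneg hlam k
  have hSpos : 0 < S lam k + 1 := by linarith
  refine ⟨min 1 ((ε/2) / (S lam k + 1)),
    lt_min (by norm_num) (div_pos (half_pos hε) hSpos), fun u hu hdist => ?_⟩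
  have hu0 : 0 ≤ u := hu.1
  have hud : u < (ε/2) / (S lam k + 1) := by
    rw [Real.dist_eq, sub_zero, abs_of_nonneg hu0] at hdist
    exact lt_of_lt_of_le hdist (min_le_right _ _)
  have h1 : G lam u ≤ line lam k u := G_le hlam hu0 k
  have h2 : line lam k u ≤ Q lam k + S lam k * u := by
    unfold line
    nlinarith [mul_nonneg hS (P_pos k).le]
  have h3 : Q lam k = Y lam n := Q_odd n
  have h4 : S lam k * u ≤ ε/2 := by
    have h5 : S lam k * ((ε/2) / (S lam k + 1)) ≤ ε/2 := by
      rw [mul_comm, div_mul_eq_mul_div, div_le_iff₀ hSpos]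
      nlinarith [half_pos hε]
    calc S lam k * u ≤ S lam k * ((ε/2)/(S lam k + 1)) :=
          mul_le_mul_of_nonneg_left hud.le hS
      _ ≤ ε/2 := h5
  have h6 : 0 ≤ G lam u := G_nonneg hlam hu0
  rw [G_zero hlam, Real.dist_eq, sub_zero, abs_of_nonneg h6]
  calc G lam u ≤ Q lam k + S lam k * u := h1.trans h2
    _ < ε := by rw [h3]; linarith

lemma G_cont (hlam : 0 < lam) : ContinuousOn (G lam) (Set.Icc 0 1) := by
  intro t ht
  rcases eq_or_lt_of_le ht.1 with h0 | h0
  · rw [← h0]; exact G_contWithin_zero hlam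
  · exact (G_contAt hlam h0).continuousWithinAt

lemma G_at_X (hlam : 0 < lam) (n : ℕ) : G lam (X n) = Y lam n := by
  have h := G_vertex hlam (2*n+1)
  rwa [P_odd, Q_odd] at h

lemma G_at_A (hlam : 0 < lam) (n : ℕ) : G lam (A n) = Z lam n := by
  have h := G_vertex hlam (2*n)
  rwa [P_even, Q_even] at h

lemma neg_log_X (n : ℕ) : -Real.log (X n) = LL n := by
  unfold X; rw [Real.log_exp]; ring

lemma arg_eq (hlam : 0 < lam) (n : ℕ) :
    lam * X n * G lam (X n) * (-Real.log (X n)) = A n := by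
  rw [G_at_X hlam, neg_log_X]
  unfold Y A
  field_simp [ne_of_gt hlam, ne_of_gt (LL_pos n)]

lemma ratio_eq (hlam : 0 < lam) (n : ℕ) :
    G lam (lam * X n * G lam (X n) * (-Real.log (X n))) / G lam (X n) = Lam n / 2 := by
  rw [arg_eq hlam, G_at_A hlam, G_at_X hlam]
  unfold Z
  rw [mul_div_assoc, div_self (ne_of_gt (Y_pos hlam n)), mul_one]

lemma log_neg_log_X (n : ℕ) : Real.log (-Real.log (X n)) = Lam n := by
  rw [neg_log_X]; unfold LL; rw [Real.log_exp]

theorem main (γ : ℝ) (hγ0 : 0 < γ) (hγ1 : γ < 1)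
    (lam : ℝ) (hlam : 0 < lam) :
    ∃ G : ℝ → ℝ,
      ContinuousOn G (Set.Icc 0 1) ∧
      MonotoneOn G (Set.Icc 0 1) ∧
      ConcaveOn ℝ (Set.Icc 0 1) G ∧
      G 0 = 0 ∧
      (∀ x ∈ Set.Ioc (0:ℝ) 1, 0 < G x) ∧
      (∃ x : ℕ → ℝ,
        StrictAnti x ∧
        (∀ n, x n ∈ Set.Ioo (0:ℝ) 1) ∧
        Filter.Tendsto x Filter.atTop (nhds 0) ∧
        (∀ n, lam * x n * G (x n) * (-Real.log (x n)) ∈ Set.Ioc (0:ℝ) 1) ∧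
        (∀ n, (1/2) * Real.log (-Real.log (x n)) ≤
            G (lam * x n * G (x n) * (-Real.log (x n))) / G (x n))) ∧
      (∀ M : ℝ, ∃ᶠ x in nhdsWithin 0 (Set.Ioi 0),
        M ≤ G (lam * x * G x * (-Real.log x)) / G x) := by
  refine ⟨G lam, G_cont hlam, fun u hu v hv huv => G_mono hlam hu.1 huv,
    G_concave hlam, G_zero hlam, fun t ht => G_pos hlam ht.1, ?_, ?_⟩
  · refine ⟨X, ?_, fun n => ⟨X_pos n, X_lt_one n⟩, X_tendsto, ?_, ?_⟩
    · -- StrictAnti X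
      apply strictAnti_nat_of_succ_lt
      intro n
      unfold X
      apply Real.exp_lt_exp.2
      have : LL n < LL (n+1) := by
        unfold LL
        apply Real.exp_lt_exp.2
        unfold Lam
        have : (2:ℝ)^n < 2^(n+1) := by
          apply pow_lt_pow_right₀ (by norm_num) (Nat.lt_succ_self n)
        nlinarith
      linarith
    · intro n
      rw [arg_eq hlam]
      exact ⟨A_pos n, A_le_one n⟩
    · intro n
      rw [ratio_eq hlam, log_neg_log_X]
      linarith [Lam_pos n]
  · intro M
    have hx : Tendsto X atTop (nhdsWithin 0 (Set.Ioi 0)) := by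
      apply tendsto_nhdsWithin_of_tendsto_nhds_of_eventually_within X X_tendsto
      exact Eventually.of_forall fun n => X_pos n
    apply hx.frequently
    apply Filter.Eventually.frequently
    filter_upwards [eventually_ge_atTop ⌈M⌉₊] with n hn
    rw [ratio_eq hlam]
    have h1 : M ≤ (⌈M⌉₊ : ℝ) := Nat.le_ceil M
    have h2 : ((⌈M⌉₊ : ℕ) : ℝ) ≤ (n : ℝ) := Nat.cast_le.mpr hn
    have h3 : (n : ℝ) + 1 ≤ Lam n / 2 := nat_le_Lam n
    linarith


end LossCons

/-- Corollary 4.2: rescaled version of Proposition 4.1 with parameter `λ > 0`. -/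
theorem loss_modulus_construction_scaled (γ : ℝ) (hγ0 : 0 < γ) (hγ1 : γ < 1)
    (lam : ℝ) (hlam : 0 < lam) :
    ∃ G : ℝ → ℝ,
      ContinuousOn G (Set.Icc 0 1) ∧
      MonotoneOn G (Set.Icc 0 1) ∧
      ConcaveOn ℝ (Set.Icc 0 1) G ∧
      G 0 = 0 ∧
      (∀ x ∈ Set.Ioc (0:ℝ) 1, 0 < G x) ∧
      (∃ x : ℕ → ℝ,
        StrictAnti x ∧
        (∀ n, x n ∈ Set.Ioo (0:ℝ) 1) ∧
        Filter.Tendsto x Filter.atTop (nhds 0) ∧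
        (∀ n, lam * x n * G (x n) * (-Real.log (x n)) ∈ Set.Ioc (0:ℝ) 1) ∧
        (∀ n, (1/2) * Real.log (-Real.log (x n)) ≤
            G (lam * x n * G (x n) * (-Real.log (x n))) / G (x n))) ∧
      (∀ M : ℝ, ∃ᶠ x in nhdsWithin 0 (Set.Ioi 0),
        M ≤ G (lam * x * G x * (-Real.log x)) / G x) :=
  LossCons.main γ hγ0 hγ1 lam hlam
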